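/- Let A = (Q, {a₁, a₂, a₃}, δ) be a synchronizing DFA in which some shortest synchronizing word does not use the letter a₃ in every position (equivalently, after possibly swapping the names of a₂ and a₃, a shortest synchronizing word avoids being a power of a₃). Let B = (Q × {a₁,a₂,a₃}, {a,b}, δ') with δ'((q,a_i), a) = (q, a_{min(i+1,3)}), δ'((q,a_i), b) = (δ(q,a_i), a₁). Then min_synch(B) ≤ 3·min_synch(A): explicitly, if w = w[1]⋯w[ℓ] is a synchronizing word for A, then v = b·v₁⋯v_ℓ is a synchronizing word for B, where v_s = b if w[s] = a₁, v_s = ab if w[s] = a₂, v_s = aab if w[s] = a₃, and |v| = 1 + Σ|v_s| ≤ 3ℓ whenever not all letters of w equal a₃. -/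

import Mathlib

/-- The two-letter alphabet {a, b}. -/
inductive Letter2 where
  | a | b
deriving DecidableEq

/-- Extension of a transition function to words (left-to-right action). -/
def runW {Q A : Type*} (δ : Q → A → Q) : Q → List A → Q
  | q, [] => q
  | q, x :: w => runW δ (δ q x) w

/-- The 2-letter automaton B built from a 3-letter automaton A = (Q, {a₁,a₂,a₃}, δ):
letter a advances the stored letter index (capped at 3 = index 2), letter b applies
the stored letter to the first component and resets the stored letter to a₁. -/
def deltaB {Q : Type*} (δ : Q → Fin 3 → Q) : Q × Fin 3 → Letter2 → Q × Fin 3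
  | (q, i), Letter2.a => (q, ⟨min ((i : ℕ) + 1) 2, by omega⟩)
  | (q, i), Letter2.b => (δ q i, ⟨0, by omega⟩)

/-- The encoding of a letter of A as a word over {a,b}: a₁ ↦ b, a₂ ↦ ab, a₃ ↦ aab. -/
def codeLetter : Fin 3 → List Letter2
  | ⟨0, _⟩ => [Letter2.b]
  | ⟨1, _⟩ => [Letter2.a, Letter2.b]
  | _ => [Letter2.a, Letter2.a, Letter2.b]

/-- The encoding of a word of A: w ↦ b·v₁⋯v_ℓ. -/
def codeWord (w : List (Fin 3)) : List Letter2 :=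
  Letter2.b :: w.flatMap codeLetter

lemma runB_block {Q : Type*} (δ : Q → Fin 3 → Q) (q : Q) (j : Fin 3)
    (rest : List Letter2) :
    runW (deltaB δ) (q, (0 : Fin 3)) (codeLetter j ++ rest) =
      runW (deltaB δ) (δ q j, (0 : Fin 3)) rest := by
  fin_cases j <;> simp [codeLetter, runW, deltaB] <;> rfl

lemma runB_code {Q : Type*} (δ : Q → Fin 3 → Q) (w : List (Fin 3)) (q : Q) :
    runW (deltaB δ) (q, (0 : Fin 3)) (w.flatMap codeLetter) =
      (runW δ q w, (0 : Fin 3)) := by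
  induction w generalizing q with
  | nil => rfl
  | cons x t ih =>
      rw [List.flatMap_cons, runB_block]
      exact ih (δ q x)

lemma code_len_le {Q : Type*} (δ : Q → Fin 3 → Q) (w : List (Fin 3)) :
    (w.flatMap codeLetter).length ≤ 3 * w.length := by
  induction w with
  | nil => simp
  | cons x t ih =>
      rw [List.flatMap_cons]
      have : (codeLetter x).length ≤ 3 := by
        fin_cases x <;> simp [codeLetter] <;> decide
      simp only [List.length_append, List.length_cons]
      omega

lemma code_len_lt (w : List (Fin 3)) (h : ∃ s ∈ w, s ≠ (2 : Fin 3)) :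
    (w.flatMap codeLetter).length + 1 ≤ 3 * w.length := by
  induction w with
  | nil => simp at h
  | cons x t ih =>
      rw [List.flatMap_cons]
      simp only [List.length_append, List.length_cons]
      by_cases hx : x = (2 : Fin 3)
      · obtain ⟨s, hs, hs2⟩ := h
        rcases List.mem_cons.mp hs with hs | hs
        · exact absurd (hs ▸ hx) hs2
        · have := ih ⟨s, hs, hs2⟩
          have hl : (codeLetter x).length ≤ 3 := by
            fin_cases x <;> simp [codeLetter] <;> decide
          omega
      · have hl : (codeLetter x).length ≤ 2 := by
          fin_cases x <;> simp_all [codeLetter] <;> decide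
        have := code_len_le (fun (q : Unit) _ => q) t
        omega

/-- If w is a shortest synchronizing word for A which does not consist solely of the
letter a₃, then the word b·v₁⋯v_ℓ synchronizes B and has length at most 3·|w|;
in particular min_synch(B) ≤ 3·min_synch(A). -/
theorem two_letter_reduction_upper
    {Q : Type*} (δ : Q → Fin 3 → Q) (w : List (Fin 3))
    (hsync : ∃ p : Q, ∀ q : Q, runW δ q w = p)
    (hshort : ∀ u : List (Fin 3), (∃ p : Q, ∀ q : Q, runW δ q u = p) → w.length ≤ u.length)
    (hnot3 : ∃ s ∈ w, s ≠ (⟨2, by omega⟩ : Fin 3)) :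
    (∃ p' : Q × Fin 3, ∀ s : Q × Fin 3, runW (deltaB δ) s (codeWord w) = p') ∧
      (codeWord w).length ≤ 3 * w.length := by
  obtain ⟨p, hp⟩ := hsync
  constructor
  · refine ⟨(p, 0), ?_⟩
    rintro ⟨q, i⟩
    have : runW (deltaB δ) (q, i) (codeWord w) =
        runW (deltaB δ) (δ q i, (0 : Fin 3)) (w.flatMap codeLetter) := rfl
    rw [this, runB_code, hp]
  · have := code_len_lt w hnot3
    simp only [codeWord, List.length_cons]
    omega
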